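/- Let i ≥ 1 and p, r ∈ ℤ. Then: (1) if r ≠ i and r ≠ -i, then s_i(c^r_p) = c^r_p; (2) if r = i, then s_i(c^r_p) = c^{i+1}_p + t_i · c^{i+1}_{p-1}; (3) if r = -i, then s_i(c^r_p) = c^{-i+1}_p - t_{i+1} · c^{-i+1}_{p-1}. -/
import Mathlib


/-!
The polynomial ring `R2 = ℚ[c₁, c₂, …, t₁, t₂, …]`: the variable `Sum.inl p` (for `p ≥ 1`)
is `c_p`, and `Sum.inr i` (for `i ≥ 1`) is `t_i`.
-/

noncomputable section
open MvPolynomial Finset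
open scoped Classical

abbrev R2 : Type := MvPolynomial (ℕ ⊕ ℕ) ℚ

/-- The variable `t_i`. -/
def Tv (i : ℕ) : R2 := X (Sum.inr i)

/-- `c_p`, with the conventions `c_0 = 1` and `c_p = 0` for `p < 0`. -/
def Cv (p : ℤ) : R2 := if p < 0 then 0 else if p = 0 then 1 else X (Sum.inl p.toNat)

/-- The complete homogeneous symmetric polynomial `h_j` evaluated on a list. -/
def hfun : List R2 → ℕ → R2
  | [], j => if j = 0 then 1 else 0
  | a :: L, j => ∑ i ∈ Finset.range (j + 1), a ^ i * hfun L (j - i)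

/-- The elementary symmetric polynomial `e_j` evaluated on a list. -/
def efun : List R2 → ℕ → R2
  | [], j => if j = 0 then 1 else 0
  | _ :: _, 0 => 1
  | a :: L, j + 1 => efun L (j + 1) + a * efun L j

/-- The list `(-t_1, …, -t_r)`. -/
def negT (r : ℕ) : List R2 := (List.range r).map fun i => -Tv (i + 1)

/-- `h^r_j(-t)`: complete homogeneous for `r ≥ 0`, elementary `e^{-r}_j(-t)` for `r < 0`. -/
def hmt (r : ℤ) (j : ℕ) : R2 :=
  if 0 ≤ r then hfun (negT r.toNat) j else efun (negT (-r).toNat) j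

/-- `c^r_p := Σ_{j=0}^p c_{p-j} h^r_j(-t)`. -/
def cc (r p : ℤ) : R2 := ∑ j ∈ Finset.range (p.toNat + 1), Cv (p - j) * hmt r j

/-- `a^s_p := (1/2)c_p + Σ_{j=1}^p c_{p-j} h^s_j(-t)`. -/
def aa (s p : ℤ) : R2 :=
  C (1/2 : ℚ) * Cv p + ∑ j ∈ Finset.Icc 1 p.toNat, Cv (p - j) * hmt s j

/-- Images of the variables under the automorphism `s_i`. -/
def sImg : ℕ → ℕ ⊕ ℕ → R2
  | 0, Sum.inr j => if j = 1 then -Tv 2 else if j = 2 then -Tv 1 else Tv j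
  | 0, Sum.inl p =>
      if p = 0 then X (Sum.inl 0)
      else Cv p - 2 * (Tv 1 + Tv 2) *
        ∑ j ∈ Finset.range p, (-1 : R2) ^ j *
          (∑ a ∈ Finset.range (j + 1), Tv 1 ^ a * Tv 2 ^ (j - a)) * Cv ((p : ℤ) - 1 - j)
  | i + 1, Sum.inr j =>
      if j = i + 1 then Tv (i + 2) else if j = i + 2 then Tv (i + 1) else Tv j
  | _ + 1, Sum.inl p => X (Sum.inl p)

/-- The ring automorphism `s_i` of `R2`. -/
def sA (i : ℕ) : R2 →ₐ[ℚ] R2 := aeval (sImg i)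

/-- The fraction field of `R2`. -/
abbrev KK : Type := FractionRing R2

/-- The canonical embedding of `R2` into its fraction field. -/
def toK : R2 →+* KK := algebraMap R2 KK

/-- The denominator `t_1 + t_2` (for `i = 0`) resp. `t_{i+1} - t_i` (for `i ≥ 1`). -/
def dden (i : ℕ) : R2 := if i = 0 then Tv 1 + Tv 2 else Tv (i + 1) - Tv i

/-- The divided difference operator `∂_i`, with values in the fraction field. -/
def dd (i : ℕ) (f : R2) : KK := (toK f - toK (sA i f)) / toK (dden i)


/-! ### Auxiliary lemmas -/

lemma hfun_nil (j : ℕ) : hfun [] j = if j = 0 then 1 else 0 := rfl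

lemma hfun_cons (a : R2) (L : List R2) (j : ℕ) :
    hfun (a :: L) j = ∑ i ∈ Finset.range (j + 1), a ^ i * hfun L (j - i) := rfl

lemma efun_nil (j : ℕ) : efun [] j = if j = 0 then 1 else 0 := rfl

lemma efun_zero (L : List R2) : efun L 0 = 1 := by cases L <;> rfl

lemma efun_cons_succ (a : R2) (L : List R2) (j : ℕ) :
    efun (a :: L) (j + 1) = efun L (j + 1) + a * efun L j := rfl

lemma hfun_zero (L : List R2) : hfun L 0 = 1 := by
  induction L with
  | nil => rfl
  | cons a L ih => simp [hfun_cons, ih]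

lemma hfun_cons_succ (a : R2) (L : List R2) (j : ℕ) :
    hfun (a :: L) (j + 1) = hfun L (j + 1) + a * hfun (a :: L) j := by
  rw [hfun_cons, Finset.sum_range_succ']
  simp only [pow_zero, one_mul, Nat.sub_zero, pow_succ, Nat.succ_sub_succ]
  rw [hfun_cons, Finset.mul_sum, add_comm]
  congr 1
  apply Finset.sum_congr rfl
  intro x _
  ring

lemma hfun_two (a b : R2) (L : List R2) (j : ℕ) :
    hfun (a :: b :: L) j
      = ∑ i ∈ Finset.range (j + 1), ∑ k ∈ Finset.range (j + 1),
          (if i + k ≤ j then a ^ i * b ^ k * hfun L (j - i - k) else 0) := by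
  rw [hfun_cons]
  apply Finset.sum_congr rfl
  intro i hi
  rw [Finset.mem_range] at hi
  have hij : i ≤ j := by omega
  rw [hfun_cons, Finset.mul_sum]
  rw [← Finset.sum_subset (Finset.range_subset_range.mpr (by omega : j - i + 1 ≤ j + 1))
      (fun k hk hk2 => by
        rw [Finset.mem_range] at hk hk2
        push_neg at hk2
        rw [if_neg (by omega)])]
  apply Finset.sum_congr rfl
  intro k hk
  rw [Finset.mem_range] at hk
  rw [if_pos (by omega)]
  ring

lemma hfun_swap (a b : R2) (L : List R2) (j : ℕ) :
    hfun (a :: b :: L) j = hfun (b :: a :: L) j := by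
  rw [hfun_two, hfun_two, Finset.sum_comm]
  apply Finset.sum_congr rfl
  intro k _
  apply Finset.sum_congr rfl
  intro i _
  by_cases h : i + k ≤ j
  · rw [if_pos h, if_pos (by omega), show j - i - k = j - k - i by omega]
    ring
  · rw [if_neg h, if_neg (by omega)]

lemma hfun_perm {L L' : List R2} (h : L.Perm L') : ∀ j, hfun L j = hfun L' j := by
  induction h with
  | nil => intro j; rfl
  | cons a _ ih =>
      intro j
      rw [hfun_cons, hfun_cons]
      exact Finset.sum_congr rfl fun i _ => by rw [ih]
  | swap a b L => intro j; exact hfun_swap b a L j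
  | trans _ _ ih1 ih2 => intro j; rw [ih1, ih2]

lemma efun_swap (a b : R2) (L : List R2) (j : ℕ) :
    efun (a :: b :: L) j = efun (b :: a :: L) j := by
  match j with
  | 0 => rfl
  | 1 =>
    simp only [efun_cons_succ, efun_zero]
    ring
  | (j + 2) =>
    simp only [efun_cons_succ]
    ring

lemma efun_perm {L L' : List R2} (h : L.Perm L') : ∀ j, efun L j = efun L' j := by
  induction h with
  | nil => intro j; rfl
  | cons a _ ih =>
      intro j
      cases j with
      | zero => rw [efun_zero, efun_zero]
      | succ j => rw [efun_cons_succ, efun_cons_succ, ih, ih]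
  | swap a b L => intro j; exact efun_swap b a L j
  | trans _ _ ih1 ih2 => intro j; rw [ih1, ih2]

lemma sA_Tv (k j : ℕ) :
    sA (k + 1) (Tv j)
      = if j = k + 1 then Tv (k + 2) else if j = k + 2 then Tv (k + 1) else Tv j := by
  rw [Tv, sA, aeval_X]
  rfl

lemma sA_Cv (k : ℕ) (p : ℤ) : sA (k + 1) (Cv p) = Cv p := by
  unfold Cv
  split_ifs with h1 h2
  · exact map_zero _
  · exact map_one _
  · rw [sA, aeval_X]; rfl

lemma sA_hfun (i : ℕ) (L : List R2) (j : ℕ) :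
    sA i (hfun L j) = hfun (L.map (sA i)) j := by
  induction L generalizing j with
  | nil =>
      simp only [hfun_nil, List.map_nil]
      split_ifs <;> simp
  | cons a L ih =>
      simp only [hfun_cons, List.map_cons, map_sum, map_mul, map_pow, ih]

lemma sA_efun (i : ℕ) (L : List R2) (j : ℕ) :
    sA i (efun L j) = efun (L.map (sA i)) j := by
  induction L generalizing j with
  | nil =>
      simp only [efun_nil, List.map_nil]
      split_ifs <;> simp
  | cons a L ih =>
      cases j with
      | zero => rw [efun_zero, efun_zero, map_one]
      | succ j =>
          simp only [efun_cons_succ, List.map_cons, map_add, map_mul, ih]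

lemma negT_split (a b : ℕ) :
    negT (a + b) = negT a ++ (List.range b).map (fun m => -Tv (a + m + 1)) := by
  rw [negT, List.range_add, List.map_append, List.map_map]
  rfl

lemma negT_succ (n : ℕ) : negT (n + 1) = negT n ++ [-Tv (n + 1)] := by
  rw [negT_split]
  rfl

lemma negT_succ2 (k : ℕ) : negT (k + 2) = negT k ++ [-Tv (k + 1), -Tv (k + 2)] := by
  rw [negT_split]
  rfl

lemma sA_neg_Tv (k j : ℕ) (h1 : j ≠ k + 1) (h2 : j ≠ k + 2) :
    sA (k + 1) (-Tv j) = -Tv j := by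
  rw [map_neg, sA_Tv, if_neg h1, if_neg h2]

lemma map_negT_small (k n : ℕ) (h : n ≤ k) : (negT n).map (sA (k + 1)) = negT n := by
  rw [negT, List.map_map]
  apply List.map_congr_left
  intro m hm
  rw [List.mem_range] at hm
  exact sA_neg_Tv k (m + 1) (by omega) (by omega)

lemma map_negT_eq (k : ℕ) : (negT (k + 1)).map (sA (k + 1)) = negT k ++ [-Tv (k + 2)] := by
  rw [negT_succ, List.map_append, map_negT_small k k le_rfl]
  have e1 : sA (k + 1) (-Tv (k + 1)) = -Tv (k + 2) := by
    rw [map_neg, sA_Tv, if_pos rfl]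
  simp [e1]

lemma map_negT_mid (k : ℕ) :
    (negT (k + 2)).map (sA (k + 1)) = negT k ++ [-Tv (k + 2), -Tv (k + 1)] := by
  rw [negT_succ2, List.map_append, map_negT_small k k le_rfl]
  have e1 : sA (k + 1) (-Tv (k + 1)) = -Tv (k + 2) := by
    rw [map_neg, sA_Tv, if_pos rfl]
  have e2 : sA (k + 1) (-Tv (k + 2)) = -Tv (k + 1) := by
    rw [map_neg, sA_Tv, if_neg (by omega), if_pos rfl]
  simp [e1, e2]

lemma map_negT_perm (k n : ℕ) (h : n ≠ k + 1) :
    ((negT n).map (sA (k + 1))).Perm (negT n) := by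
  rcases le_or_gt n k with hn | hn
  · rw [map_negT_small k n hn]
  · obtain ⟨m, rfl⟩ : ∃ m, n = (k + 2) + m := ⟨n - (k + 2), by omega⟩
    rw [negT_split (k + 2) m, List.map_append, map_negT_mid]
    have htail : ((List.range m).map (fun a => -Tv (k + 2 + a + 1))).map (sA (k + 1))
        = (List.range m).map (fun a => -Tv (k + 2 + a + 1)) := by
      rw [List.map_map]
      apply List.map_congr_left
      intro a _
      exact sA_neg_Tv k (k + 2 + a + 1) (by omega) (by omega)
    rw [htail]
    apply List.Perm.append_right
    rw [negT_succ2]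
    exact List.Perm.append_left _ (List.Perm.swap _ _ _)

lemma hmt_nonneg (r : ℤ) (h : 0 ≤ r) (j : ℕ) : hmt r j = hfun (negT r.toNat) j := if_pos h

lemma hmt_nat (n : ℕ) (j : ℕ) : hmt (n : ℤ) j = hfun (negT n) j := by
  rw [hmt_nonneg _ (Int.natCast_nonneg n), Int.toNat_natCast]

lemma hmt_negnat (n : ℕ) (j : ℕ) : hmt (-(n : ℤ)) j = efun (negT n) j := by
  cases n with
  | zero =>
      rw [show (-((0:ℕ):ℤ)) = ((0:ℕ):ℤ) by norm_num, hmt_nat]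
      rfl
  | succ n =>
      rw [hmt, if_neg (by omega), neg_neg, Int.toNat_natCast]

lemma hmt_zero (r : ℤ) : hmt r 0 = 1 := by
  rw [hmt]
  split_ifs
  · exact hfun_zero _
  · exact efun_zero _

lemma Cv_neg (p : ℤ) (h : p < 0) : Cv p = 0 := if_pos h

lemma cc_shift (s p : ℤ) :
    ∑ j ∈ Finset.range p.toNat, Cv (p - 1 - (j : ℤ)) * hmt s j = cc s (p - 1) := by
  rcases le_or_gt p 0 with h | h
  · rw [Int.toNat_of_nonpos h, Finset.range_zero, Finset.sum_empty, cc,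
      Int.toNat_of_nonpos (by omega : p - 1 ≤ 0), Finset.sum_range_one,
      show p - 1 - ((0 : ℕ) : ℤ) = p - 1 by simp, Cv_neg (p - 1) (by omega), zero_mul]
  · have h2 : p.toNat = (p - 1).toNat + 1 := by omega
    rw [h2, cc]

lemma key_inv (k : ℕ) (r : ℤ) (h1 : r ≠ (k : ℤ) + 1) (h2 : r ≠ -((k : ℤ) + 1)) (j : ℕ) :
    sA (k + 1) (hmt r j) = hmt r j := by
  rcases le_or_gt 0 r with hr | hr
  · rw [hmt_nonneg r hr, sA_hfun]
    exact hfun_perm (map_negT_perm k r.toNat (by omega)) j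
  · rw [hmt, if_neg (not_le.mpr hr), sA_efun]
    exact efun_perm (map_negT_perm k (-r).toNat (by omega)) j

lemma key_h (k j : ℕ) :
    sA (k + 1) (hmt ((k : ℤ) + 1) j)
      = hmt ((k : ℤ) + 2) j
        + Tv (k + 1) * (if j = 0 then 0 else hmt ((k : ℤ) + 2) (j - 1)) := by
  have e1 : ((k : ℤ) + 1) = ((k + 1 : ℕ) : ℤ) := by push_cast; ring
  have e2 : ((k : ℤ) + 2) = ((k + 2 : ℕ) : ℤ) := by push_cast; ring
  rw [e1, e2]
  simp only [hmt_nat]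
  rw [sA_hfun, map_negT_eq]
  have hperm1 : (negT k ++ [-Tv (k + 2)]).Perm (-Tv (k + 2) :: negT k) :=
    List.perm_append_comm
  have hperm2 : (-Tv (k + 1) :: -Tv (k + 2) :: negT k).Perm (negT (k + 2)) := by
    rw [negT_succ2]
    exact List.perm_append_comm (l₁ := [-Tv (k + 1), -Tv (k + 2)])
  rw [hfun_perm hperm1]
  cases j with
  | zero => simp [hfun_zero]
  | succ j =>
      rw [if_neg (Nat.succ_ne_zero j), Nat.add_sub_cancel]
      have h2 : ∀ n, hfun (-Tv (k + 1) :: -Tv (k + 2) :: negT k) n = hfun (negT (k + 2)) n :=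
        hfun_perm hperm2
      have h3 := hfun_cons_succ (-Tv (k + 1)) (-Tv (k + 2) :: negT k) j
      rw [h2, h2] at h3
      linear_combination -h3

lemma key_e (k j : ℕ) :
    sA (k + 1) (hmt (-((k : ℤ) + 1)) j)
      = hmt (-(k : ℤ)) j
        - Tv (k + 2) * (if j = 0 then 0 else hmt (-(k : ℤ)) (j - 1)) := by
  have e1 : (-((k : ℤ) + 1)) = -((k + 1 : ℕ) : ℤ) := by push_cast; ring
  rw [e1, hmt_negnat, sA_efun, map_negT_eq, hmt_negnat]
  have hperm1 : (negT k ++ [-Tv (k + 2)]).Perm (-Tv (k + 2) :: negT k) :=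
    List.perm_append_comm
  rw [efun_perm hperm1]
  cases j with
  | zero => simp [efun_zero]
  | succ j =>
      rw [if_neg (Nat.succ_ne_zero j), Nat.add_sub_cancel, efun_cons_succ, hmt_negnat]
      ring

theorem statement2 (i : ℕ) (hi : 1 ≤ i) (p r : ℤ) :
    (r ≠ (i : ℤ) → r ≠ -(i : ℤ) → sA i (cc r p) = cc r p) ∧
    (r = (i : ℤ) →
      sA i (cc r p) = cc ((i : ℤ) + 1) p + Tv i * cc ((i : ℤ) + 1) (p - 1)) ∧
    (r = -(i : ℤ) →
      sA i (cc r p) = cc (-(i : ℤ) + 1) p - Tv (i + 1) * cc (-(i : ℤ) + 1) (p - 1)) := by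
  obtain ⟨k, rfl⟩ : ∃ k, i = k + 1 := ⟨i - 1, by omega⟩
  have ec1 : (((k + 1 : ℕ) : ℤ)) = (k : ℤ) + 1 := by push_cast; ring
  refine ⟨?_, ?_, ?_⟩
  · intro h1 h2
    rw [cc, map_sum]
    apply Finset.sum_congr rfl
    intro j _
    rw [map_mul, sA_Cv, key_inv k r (by omega) (by omega)]
  · intro hr
    subst hr
    rw [ec1]
    have ec2 : ((k : ℤ) + 1) + 1 = (k : ℤ) + 2 := by ring
    rw [ec2, cc, map_sum]
    have expand : ∀ j : ℕ, sA (k + 1) (Cv (p - j) * hmt ((k : ℤ) + 1) j)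
        = Cv (p - j) * hmt ((k : ℤ) + 2) j
          + Tv (k + 1) * (Cv (p - j) * (if j = 0 then 0 else hmt ((k : ℤ) + 2) (j - 1))) := by
      intro j
      rw [map_mul, sA_Cv, key_h k j]
      ring
    rw [Finset.sum_congr rfl (fun j _ => expand j), Finset.sum_add_distrib, ← Finset.mul_sum]
    have hA : ∑ j ∈ Finset.range (p.toNat + 1), Cv (p - j) * hmt ((k : ℤ) + 2) j
        = cc ((k : ℤ) + 2) p := by rw [cc]
    have hB : ∑ j ∈ Finset.range (p.toNat + 1),
        (Cv (p - j) * (if j = 0 then 0 else hmt ((k : ℤ) + 2) (j - 1)))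
        = cc ((k : ℤ) + 2) (p - 1) := by
      rw [Finset.sum_range_succ']
      simp only [if_pos rfl, if_true, mul_zero, add_zero, if_neg (Nat.succ_ne_zero _), Nat.add_sub_cancel]
      rw [← cc_shift ((k : ℤ) + 2) p]
      apply Finset.sum_congr rfl
      intro j _
      congr 2
      push_cast
      ring
    rw [hA, hB]
  · intro hr
    subst hr
    rw [ec1]
    have ec2 : -((k : ℤ) + 1) + 1 = -(k : ℤ) := by ring
    rw [ec2, cc, map_sum]
    have expand : ∀ j : ℕ, sA (k + 1) (Cv (p - j) * hmt (-((k : ℤ) + 1)) j)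
        = Cv (p - j) * hmt (-(k : ℤ)) j
          - Tv (k + 2) * (Cv (p - j) * (if j = 0 then 0 else hmt (-(k : ℤ)) (j - 1))) := by
      intro j
      rw [map_mul, sA_Cv, key_e k j]
      ring
    rw [Finset.sum_congr rfl (fun j _ => expand j), Finset.sum_sub_distrib, ← Finset.mul_sum]
    have hA : ∑ j ∈ Finset.range (p.toNat + 1), Cv (p - j) * hmt (-(k : ℤ)) j
        = cc (-(k : ℤ)) p := by rw [cc]
    have hB : ∑ j ∈ Finset.range (p.toNat + 1),
        (Cv (p - j) * (if j = 0 then 0 else hmt (-(k : ℤ)) (j - 1)))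
        = cc (-(k : ℤ)) (p - 1) := by
      rw [Finset.sum_range_succ']
      simp only [if_pos rfl, if_true, mul_zero, add_zero, if_neg (Nat.succ_ne_zero _), Nat.add_sub_cancel]
      rw [← cc_shift (-(k : ℤ)) p]
      apply Finset.sum_congr rfl
      intro j _
      congr 2
      push_cast
      ring
    rw [hA, hB]
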